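/- Let a < b be real numbers, let F : ℝ → ℂ be continuously differentiable on I = [a, b], let 0 < λ ≤ b − a, let p, p' ∈ (1, ∞) satisfy 1/p + 1/p' = 1, and let I₀ ⊆ I be a subinterval of length λ. Then for every t ∈ I₀ one has |F(t)| ≤ λ^{−1} ∫_I |F(s)| ds + λ^{1/p'} (∫_I |F'(s)|^p ds)^{1/p}. -/

import Mathlib

open MeasureTheory Set Topology

/-- Intermediate inequality in the proof of Lemma 2.5: for `t` in a subinterval
`I₀ = [c,d] ⊆ [a,b]` of length `λ`,
`|F(t)| ≤ λ⁻¹ ∫_I |F| + λ^{1/p'} (∫_I |F'|^p)^{1/p}`. -/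
theorem oscillating_dunkl_lemma_2_5_intermediate
    (a b : ℝ) (hab : a < b) (F : ℝ → ℂ)
    (hF : ContDiffOn ℝ 1 F (Icc a b))
    (lam p p' : ℝ) (hlam_pos : 0 < lam) (hlam_le : lam ≤ b - a)
    (hp : 1 < p) (hp' : 1 < p') (hpp' : 1 / p + 1 / p' = 1)
    (c d : ℝ) (hlen : d - c = lam) (hsub : Icc c d ⊆ Icc a b) :
    ∀ t ∈ Icc c d,
      ‖F t‖ ≤ lam⁻¹ * (∫ s in a..b, ‖F s‖)
        + lam ^ (1 / p') * (∫ s in a..b, ‖deriv F s‖ ^ p) ^ (1 / p) := by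
  intro t ht
  have hcd : c ≤ d := by linarith
  have hac : a ≤ c := (hsub (left_mem_Icc.2 hcd)).1
  have hdb : d ≤ b := (hsub (right_mem_Icc.2 hcd)).2
  have hFcont : ContinuousOn F (Icc a b) := hF.continuousOn
  have hUD : UniqueDiffOn ℝ (Icc a b) := uniqueDiffOn_Icc hab
  set g := derivWithin F (Icc a b) with hgdef
  have hgcont : ContinuousOn g (Icc a b) := hF.continuousOn_derivWithin hUD le_rfl
  have hderiv : ∀ x ∈ Ioo a b, HasDerivAt F (g x) x := by
    intro x hx
    have hmem : Icc a b ∈ 𝓝 x := Icc_mem_nhds hx.1 hx.2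
    have hd : DifferentiableAt ℝ F x :=
      (hF.differentiableOn one_ne_zero x (Ioo_subset_Icc_self hx)).differentiableAt hmem
    have h1 : HasDerivAt F (deriv F x) x := hd.hasDerivAt
    rwa [hgdef, derivWithin_of_mem_nhds hmem]
  have hderiv_eq : ∀ x ∈ Ioo a b, deriv F x = g x := fun x hx => ((hderiv x hx).deriv)
  -- minimum point of ‖F‖ on [c,d]
  obtain ⟨s₀, hs₀mem, hs₀min⟩ :=
    isCompact_Icc.exists_isMinOn (nonempty_Icc.2 hcd) ((hFcont.mono hsub).norm)
  -- Step B : ‖F s₀‖ ≤ lam⁻¹ * ∫_a^b ‖F‖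
  have hInt_ab : IntervalIntegrable (fun s => ‖F s‖) volume a b :=
    (hFcont.norm.mono (uIcc_of_le hab.le).le).intervalIntegrable
  have hInt_cd : IntervalIntegrable (fun s => ‖F s‖) volume c d :=
    ((hFcont.mono hsub).norm.mono (uIcc_of_le hcd).le).intervalIntegrable
  have hB1 : lam * ‖F s₀‖ ≤ ∫ s in c..d, ‖F s‖ := by
    have h1 : (∫ _ in c..d, ‖F s₀‖) ≤ ∫ s in c..d, ‖F s‖ :=
      intervalIntegral.integral_mono_on hcd intervalIntegrable_const hInt_cd
        (fun x hx => hs₀min hx)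
    rwa [intervalIntegral.integral_const, hlen, smul_eq_mul] at h1
  have hB2 : (∫ s in c..d, ‖F s‖) ≤ ∫ s in a..b, ‖F s‖ :=
    intervalIntegral.integral_mono_interval hac hcd hdb
      (Filter.Eventually.of_forall fun x => norm_nonneg _) hInt_ab
  have hB : ‖F s₀‖ ≤ lam⁻¹ * ∫ s in a..b, ‖F s‖ := by
    rw [le_inv_mul_iff₀ hlam_pos]
    exact hB1.trans hB2
  -- Step C : FTC between s₀ and t
  have huIcc : uIcc s₀ t ⊆ Icc a b := (uIcc_subset_Icc hs₀mem ht).trans hsub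
  have hIoo : Ioo (min s₀ t) (max s₀ t) ⊆ Ioo a b := by
    intro x hx
    have h1 : a ≤ min s₀ t := le_min (hac.trans hs₀mem.1) (hac.trans ht.1)
    have h2 : max s₀ t ≤ b := max_le (hs₀mem.2.trans hdb) (ht.2.trans hdb)
    exact ⟨lt_of_le_of_lt h1 hx.1, lt_of_lt_of_le hx.2 h2⟩
  have hgint : IntervalIntegrable g volume s₀ t :=
    (hgcont.mono huIcc).intervalIntegrable
  have hFTC : (∫ u in s₀..t, g u) = F t - F s₀ :=
    intervalIntegral.integral_eq_sub_of_hasDeriv_right (hFcont.mono huIcc)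
      (fun x hx => ((hderiv x (hIoo hx)).hasDerivWithinAt)) hgint
  have hgnorm_int_ab : IntervalIntegrable (fun u => ‖g u‖) volume a b :=
    (hgcont.norm.mono (uIcc_of_le hab.le).le).intervalIntegrable
  have hgnorm_int_cd : IntervalIntegrable (fun u => ‖g u‖) volume c d :=
    hgnorm_int_ab.mono_set (by rw [uIcc_of_le hcd, uIcc_of_le hab.le]; exact hsub)
  have hC : ‖F t‖ ≤ ‖F s₀‖ + ∫ u in c..d, ‖g u‖ := by
    have h1 : ‖F t‖ ≤ ‖F s₀‖ + ‖∫ u in s₀..t, g u‖ := by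
      calc ‖F t‖ = ‖F s₀ + (F t - F s₀)‖ := by ring_nf
        _ ≤ ‖F s₀‖ + ‖F t - F s₀‖ := norm_add_le _ _
        _ = ‖F s₀‖ + ‖∫ u in s₀..t, g u‖ := by rw [hFTC]
    have h2 : ‖∫ u in s₀..t, g u‖ ≤ ∫ u in c..d, ‖g u‖ := by
      rcases le_total s₀ t with h | h
      · calc ‖∫ u in s₀..t, g u‖ ≤ ∫ u in s₀..t, ‖g u‖ :=
              intervalIntegral.norm_integral_le_integral_norm h
          _ ≤ ∫ u in c..d, ‖g u‖ :=
              intervalIntegral.integral_mono_interval hs₀mem.1 h ht.2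
                (Filter.Eventually.of_forall fun x => norm_nonneg _) hgnorm_int_cd
      · calc ‖∫ u in s₀..t, g u‖ = ‖∫ u in t..s₀, g u‖ := by
              rw [intervalIntegral.integral_symm]; simp
          _ ≤ ∫ u in t..s₀, ‖g u‖ := intervalIntegral.norm_integral_le_integral_norm h
          _ ≤ ∫ u in c..d, ‖g u‖ :=
              intervalIntegral.integral_mono_interval ht.1 h hs₀mem.2
                (Filter.Eventually.of_forall fun x => norm_nonneg _) hgnorm_int_cd
    linarith
  -- Step D : Hölder
  set μ := volume.restrict (Ioc c d) with hμdef
  have hμuniv : μ Set.univ = ENNReal.ofReal lam := by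
    rw [hμdef, Measure.restrict_apply_univ, Real.volume_Ioc, hlen]
  have hfin : IsFiniteMeasure μ := ⟨by rw [hμuniv]; exact ENNReal.ofReal_lt_top⟩
  have hpq : Real.HolderConjugate p p' := Real.holderConjugate_iff.mpr ⟨hp, by rw [← one_div, ← one_div]; exact hpp'⟩
  have hgaesm : AEStronglyMeasurable g μ :=
    (hgcont.mono ((Ioc_subset_Icc_self).trans hsub)).aestronglyMeasurable measurableSet_Ioc
  obtain ⟨C, hC_bd⟩ := isCompact_Icc.exists_bound_of_continuousOn hgcont
  have hgmem : MemLp g (ENNReal.ofReal p) μ := by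
    refine (memLp_top_of_bound hgaesm C ?_).mono_exponent le_top
    refine (ae_restrict_mem measurableSet_Ioc).mono fun x hx => ?_
    exact hC_bd x (hsub (Ioc_subset_Icc_self hx))
  have h1mem : MemLp (fun _ : ℝ => (1 : ℂ)) (ENNReal.ofReal p') μ := memLp_const 1
  have hHolder := MeasureTheory.integral_mul_norm_le_Lp_mul_Lq (μ := μ) hpq hgmem h1mem
  have hone : (∫ x, ‖(1 : ℂ)‖ ^ p' ∂μ) = lam := by
    simp only [norm_one, Real.one_rpow]
    rw [integral_const, Measure.real, hμuniv, smul_eq_mul, mul_one,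
      ENNReal.toReal_ofReal hlam_pos.le]
  have hD1 : (∫ u in c..d, ‖g u‖) ≤ (∫ x, ‖g x‖ ^ p ∂μ) ^ (1 / p) * lam ^ (1 / p') := by
    rw [intervalIntegral.integral_of_le hcd]
    calc (∫ x in Ioc c d, ‖g x‖) = ∫ x, ‖g x‖ * ‖(1 : ℂ)‖ ∂μ := by
          simp [hμdef]
      _ ≤ (∫ x, ‖g x‖ ^ p ∂μ) ^ (1 / p) * (∫ x, ‖(1 : ℂ)‖ ^ p' ∂μ) ^ (1 / p') := hHolder
      _ = (∫ x, ‖g x‖ ^ p ∂μ) ^ (1 / p) * lam ^ (1 / p') := by rw [hone]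
  -- compare the p-integrals
  have hgp_cont : ContinuousOn (fun x => ‖g x‖ ^ p) (Icc a b) :=
    (hgcont.norm).rpow_const (fun x _ => Or.inr hpq.nonneg)
  have hgp_int : IntegrableOn (fun x => ‖g x‖ ^ p) (Ioc a b) volume :=
    (hgp_cont.integrableOn_Icc).mono_set Ioc_subset_Icc_self
  have hD2 : (∫ x, ‖g x‖ ^ p ∂μ) ≤ ∫ x in Ioc a b, ‖g x‖ ^ p := by
    rw [hμdef]
    exact setIntegral_mono_set hgp_int
      (Filter.Eventually.of_forall fun x => Real.rpow_nonneg (norm_nonneg _) _)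
      ((Ioc_subset_Ioc hac hdb).eventuallyLE)
  have hD3 : (∫ x in Ioc a b, ‖g x‖ ^ p) = ∫ s in a..b, ‖deriv F s‖ ^ p := by
    rw [intervalIntegral.integral_of_le hab.le]
    refine setIntegral_congr_ae measurableSet_Ioc ?_
    have hb : ∀ᵐ x : ℝ, x ≠ b := by
      refine ae_iff.2 ?_
      simpa using Real.volume_singleton
    filter_upwards [hb] with x hx hmem
    rw [hderiv_eq x ⟨hmem.1, lt_of_le_of_ne hmem.2 hx⟩]
  have hμnonneg : 0 ≤ ∫ x, ‖g x‖ ^ p ∂μ :=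
    integral_nonneg fun x => Real.rpow_nonneg (norm_nonneg _) _
  have hD4 : (∫ x, ‖g x‖ ^ p ∂μ) ^ (1 / p) ≤ (∫ s in a..b, ‖deriv F s‖ ^ p) ^ (1 / p) :=
    Real.rpow_le_rpow hμnonneg (by rw [← hD3]; exact hD2) (by positivity)
  have hD : (∫ u in c..d, ‖g u‖) ≤ lam ^ (1 / p') * (∫ s in a..b, ‖deriv F s‖ ^ p) ^ (1 / p) := by
    calc (∫ u in c..d, ‖g u‖)
        ≤ (∫ x, ‖g x‖ ^ p ∂μ) ^ (1 / p) * lam ^ (1 / p') := hD1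
      _ ≤ (∫ s in a..b, ‖deriv F s‖ ^ p) ^ (1 / p) * lam ^ (1 / p') := by
          apply mul_le_mul_of_nonneg_right hD4 (Real.rpow_nonneg hlam_pos.le _)
      _ = lam ^ (1 / p') * (∫ s in a..b, ‖deriv F s‖ ^ p) ^ (1 / p) := mul_comm _ _
  linarith
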